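/- The generalized exponential mechanism maximizes expected quality minus scaled KL divergence to the prior: let R be a nonempty finite set, ε > 0, Q : R → ℝ a quality function, and μ a probability distribution on R with μ(r) > 0 for all r ∈ R. Define ν*(r) = μ(r)·exp((ε/2)·Q(r)) / ∑_{r' ∈ R} μ(r')·exp((ε/2)·Q(r')). Then for every probability distribution ν on R, E_{r ∼ ν}[Q(r)] − (2/ε)·D_KL(ν || μ) ≤ E_{r ∼ ν*}[Q(r)] − (2/ε)·D_KL(ν* || μ). -/

import Mathlib

open scoped Classical
open Finset

/-- KL divergence between distributions on a finite set `R`: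
`D_KL(ν||μ) = ∑_r ν(r)·ln(ν(r)/μ(r))` (with the convention `0·ln 0 = 0`,
which holds since in Lean `0 * Real.log x = 0`). -/
noncomputable def klDiv {R : Type*} [Fintype R] (ν μ : R → ℝ) : ℝ :=
  ∑ r : R, ν r * Real.log (ν r / μ r)

/-- The generalized exponential mechanism distribution with prior `μ`, privacy parameter
`ε`, and quality function `Q`: it chooses `r` with probability proportional to
`μ(r)·exp((ε/2)·Q(r))`. -/
noncomputable def genExpDist {R : Type*} [Fintype R] (ε : ℝ) (μ Q : R → ℝ) : R → ℝ :=
  fun r => μ r * Real.exp (ε / 2 * Q r) / ∑ r' : R, μ r' * Real.exp (ε / 2 * Q r')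

lemma gibbs {R : Type*} [Fintype R] (ν p : R → ℝ) (hν0 : ∀ r, 0 ≤ ν r)
    (hp : ∀ r, 0 < p r) (hνs : ∑ r : R, ν r = 1) (hps : ∑ r : R, p r = 1) :
    0 ≤ klDiv ν p := by
  have h : ∑ r : R, ν r * Real.log (p r / ν r) ≤ ∑ r : R, (p r - ν r) := by
    apply Finset.sum_le_sum
    intro r _
    rcases eq_or_lt_of_le (hν0 r) with h0 | h0
    · simp [← h0, (hp r).le]
    · have hpos : 0 < p r / ν r := div_pos (hp r) h0
      have := Real.log_le_sub_one_of_pos hpos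
      calc ν r * Real.log (p r / ν r) ≤ ν r * (p r / ν r - 1) := by
            exact mul_le_mul_of_nonneg_left this (hν0 r)
        _ = p r - ν r := by field_simp
  have hsum : ∑ r : R, (p r - ν r) = 0 := by rw [Finset.sum_sub_distrib, hνs, hps]; ring
  have hneg : ∑ r : R, ν r * Real.log (p r / ν r) = - klDiv ν p := by
    unfold klDiv
    rw [← Finset.sum_neg_distrib]
    apply Finset.sum_congr rfl
    intro r _
    rcases eq_or_lt_of_le (hν0 r) with h0 | h0
    · simp [← h0]
    · rw [show ν r / p r = (p r / ν r)⁻¹ by rw [inv_div], Real.log_inv]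
      ring
  linarith [hneg ▸ h]

/-- The generalized exponential mechanism maximizes expected quality minus scaled
KL divergence to the prior: for every probability distribution `ν` on `R`,
`E_{r∼ν}[Q(r)] − (2/ε)·D_KL(ν||μ) ≤ E_{r∼ν*}[Q(r)] − (2/ε)·D_KL(ν*||μ)`,
where `ν*(r) ∝ μ(r)·exp((ε/2)·Q(r))`. -/
theorem genExpMech_maximizes {R : Type*} [Fintype R] [Nonempty R]
    (ε : ℝ) (hε : 0 < ε) (Q : R → ℝ) (μ : R → ℝ)
    (hμpos : ∀ r, 0 < μ r) (hμ1 : ∀ r, μ r ≤ 1) (hμsum : ∑ r : R, μ r = 1)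
    (ν : R → ℝ) (hν : ∀ r, ν r ∈ Set.Icc (0 : ℝ) 1) (hνsum : ∑ r : R, ν r = 1) :
    (∑ r : R, ν r * Q r) - (2 / ε) * klDiv ν μ
      ≤ (∑ r : R, genExpDist ε μ Q r * Q r) - (2 / ε) * klDiv (genExpDist ε μ Q) μ := by
  set a : ℝ := ε / 2 with ha
  set Z : ℝ := ∑ r' : R, μ r' * Real.exp (a * Q r') with hZ
  have hZpos : 0 < Z := Finset.sum_pos (fun r _ => mul_pos (hμpos r) (Real.exp_pos _))
    Finset.univ_nonempty
  set p : R → ℝ := genExpDist ε μ Q with hp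
  have hppos : ∀ r, 0 < p r := fun r =>
    div_pos (mul_pos (hμpos r) (Real.exp_pos _)) hZpos
  have hpsum : ∑ r : R, p r = 1 := by
    rw [hp]; unfold genExpDist
    rw [← Finset.sum_div]
    exact div_self (ne_of_gt hZpos)
  -- key identity for any nonneg w
  have key : ∀ w : R → ℝ, (∀ r, 0 ≤ w r) →
      klDiv w p = klDiv w μ + (∑ r : R, w r) * Real.log Z - a * ∑ r : R, w r * Q r := by
    intro w hw
    unfold klDiv
    have step : ∀ r ∈ Finset.univ, w r * Real.log (w r / p r)
        = w r * Real.log (w r / μ r) + w r * Real.log Z - a * (w r * Q r) := by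
      intro r _
      rcases eq_or_lt_of_le (hw r) with h0 | h0
      · simp [← h0]
      · have hpr : p r = μ r * Real.exp (a * Q r) / Z := rfl
        have : Real.log (w r / p r) = Real.log (w r / μ r) + Real.log Z - a * Q r := by
          rw [hpr]
          rw [Real.log_div (ne_of_gt h0) (ne_of_gt (div_pos (mul_pos (hμpos r) (Real.exp_pos _)) hZpos)),
              Real.log_div (ne_of_gt (mul_pos (hμpos r) (Real.exp_pos _))) (ne_of_gt hZpos),
              Real.log_mul (ne_of_gt (hμpos r)) (ne_of_gt (Real.exp_pos _)),
              Real.log_exp,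
              Real.log_div (ne_of_gt h0) (ne_of_gt (hμpos r))]
          ring
        rw [this]; ring
    rw [Finset.sum_congr rfl step, Finset.sum_sub_distrib, Finset.sum_add_distrib,
        ← Finset.sum_mul, ← Finset.mul_sum]
  have hν0 : ∀ r, 0 ≤ ν r := fun r => (hν r).1
  have keyν := key ν hν0
  have keyp := key p (fun r => (hppos r).le)
  rw [hνsum] at keyν
  rw [hpsum] at keyp
  have hpp : klDiv p p = 0 := by
    unfold klDiv
    apply Finset.sum_eq_zero
    intro r _
    rw [div_self (ne_of_gt (hppos r)), Real.log_one, mul_zero]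
  have hg := gibbs ν p hν0 hppos hνsum hpsum
  have hεinv : (2 / ε) * a = 1 := by field_simp [ha]; linarith
  -- From keyν: klDiv ν μ = klDiv ν p - log Z + a * ∑ ν Q
  -- LHS = ∑νQ - (2/ε)(klDiv ν p - log Z + a∑νQ) = (2/ε) log Z - (2/ε) klDiv ν p
  have h1 : (∑ r : R, ν r * Q r) - (2 / ε) * klDiv ν μ
      = (2 / ε) * Real.log Z - (2 / ε) * klDiv ν p := by
    have : klDiv ν μ = klDiv ν p - Real.log Z + a * ∑ r : R, ν r * Q r := by
      rw [keyν]; ring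
    rw [this]
    have e : 2 / ε * (a * ∑ r : R, ν r * Q r) = ∑ r : R, ν r * Q r := by
      rw [← mul_assoc, hεinv, one_mul]
    have e2 : 2 / ε * (klDiv ν p - Real.log Z + a * ∑ r : R, ν r * Q r)
        = 2 / ε * klDiv ν p - 2 / ε * Real.log Z + 2 / ε * (a * ∑ r : R, ν r * Q r) := by ring
    rw [e2, e]; ring
  have h2 : (∑ r : R, p r * Q r) - (2 / ε) * klDiv p μ = (2 / ε) * Real.log Z := by
    have : klDiv p μ = - Real.log Z + a * ∑ r : R, p r * Q r := by
      rw [show klDiv p μ = klDiv p p - 1 * Real.log Z + a * ∑ r : R, p r * Q r by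
        rw [keyp]; ring, hpp]; ring
    rw [this]
    have e : 2 / ε * (a * ∑ r : R, p r * Q r) = ∑ r : R, p r * Q r := by
      rw [← mul_assoc, hεinv, one_mul]
    have e2 : 2 / ε * (-Real.log Z + a * ∑ r : R, p r * Q r)
        = - (2 / ε * Real.log Z) + 2 / ε * (a * ∑ r : R, p r * Q r) := by ring
    rw [e2, e]; ring
  rw [h1, h2]
  have h2ε : 0 < 2 / ε := by positivity
  nlinarith [mul_nonneg h2ε.le hg]
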